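/- Let 𝔤 be the 6-dimensional Lie algebra with brackets [e₁,u₁]=u₃, [e₁,u₂]=½u₄, [e₁,u₃]=-u₁, [e₁,u₄]=-½u₂, [u₁,u₂]=u₂, [u₁,u₃]=-4e₁, [u₁,u₄]=-u₄, [u₂,u₃]=-u₄, [u₃,u₄]=u₂, u₅ central, and let 𝔪 = span{u₁,u₂,u₃,u₄,u₅} with B = diag(1,1,1,1,-1) on 𝔪 (with respect to u₁,...,u₅). Then U = u₂ + (1/√2)u₃ + √(3/2)u₅ + √2 e₁ satisfies B(U_𝔪, U_𝔪) = 0 and B(U_𝔪, [Z,U]_𝔪) = 0 for all Z ∈ 𝔤; i.e. U is a null absolutely geodesic vector. -/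

import Mathlib

/-- The bracket of the 6-dimensional Lie algebra (Komrakov 1.1².11 extended by a
central element u₅) on ℝ⁶ with basis (e₁,u₁,u₂,u₃,u₄,u₅) = (coords 0,…,5). -/
noncomputable def brK6 (x y : Fin 6 → ℝ) : Fin 6 → ℝ :=
  ![-4 * (x 1 * y 3 - x 3 * y 1),
    -(x 0 * y 3 - x 3 * y 0),
    -(1/2) * (x 0 * y 4 - x 4 * y 0) + (x 1 * y 2 - x 2 * y 1) + (x 3 * y 4 - x 4 * y 3),
    (x 0 * y 1 - x 1 * y 0),
    (1/2) * (x 0 * y 2 - x 2 * y 0) - (x 1 * y 4 - x 4 * y 1) - (x 2 * y 3 - x 3 * y 2),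
    0]

/-- The form B = diag(1,1,1,1,-1) on 𝔪 = span{u₁,…,u₅}, applied to the
𝔪-components (coordinates 1,…,5) of elements of 𝔤. -/
def BK6 (x y : Fin 6 → ℝ) : ℝ :=
  x 1 * y 1 + x 2 * y 2 + x 3 * y 3 + x 4 * y 4 - x 5 * y 5

/-- The vector U = u₂ + (1/√2)u₃ + √(3/2)u₅ + √2 e₁. -/
noncomputable def UK6 : Fin 6 → ℝ :=
  ![Real.sqrt 2, 0, 1, 1 / Real.sqrt 2, 0, Real.sqrt (3/2)]

section aux
variable {α : Type*} (a b c d e f : α)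
lemma vec6_0 : ![a,b,c,d,e,f] (0 : Fin 6) = a := rfl
lemma vec6_1 : ![a,b,c,d,e,f] (1 : Fin 6) = b := rfl
lemma vec6_2 : ![a,b,c,d,e,f] (2 : Fin 6) = c := rfl
lemma vec6_3 : ![a,b,c,d,e,f] (3 : Fin 6) = d := rfl
lemma vec6_4 : ![a,b,c,d,e,f] (4 : Fin 6) = e := rfl
lemma vec6_5 : ![a,b,c,d,e,f] (5 : Fin 6) = f := rfl
end aux

/-- U is a null absolutely geodesic vector: B(U_𝔪,U_𝔪) = 0 and
B(U_𝔪, [Z,U]_𝔪) = 0 for all Z ∈ 𝔤. -/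
theorem stmt16 :
    BK6 UK6 UK6 = 0 ∧ ∀ Z : Fin 6 → ℝ, BK6 UK6 (brK6 Z UK6) = 0 := by
  have h2 : Real.sqrt 2 ^ 2 = 2 := Real.sq_sqrt (by norm_num)
  have hne : Real.sqrt 2 ≠ 0 := by positivity
  have h3 : Real.sqrt (3/2) ^ 2 = 3/2 := Real.sq_sqrt (by norm_num)
  constructor
  · simp only [BK6, UK6, vec6_0, vec6_1, vec6_2, vec6_3, vec6_4, vec6_5]
    field_simp
    nlinarith [h2, h3]
  · intro Z
    simp only [BK6, brK6, UK6, vec6_0, vec6_1, vec6_2, vec6_3, vec6_4, vec6_5]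
    field_simp
    linear_combination (Z 4) * h2
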